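/- Let λ = (λ_1, …, λ_m) be a Young diagram with λ_1 ≥ λ_2 ≥ … ≥ λ_m ≥ 0, and let λ° denote the skew shape obtained by rotating λ by 180 degrees, namely the skew shape μ/ν where μ = ((λ_1), (λ_1), …, (λ_1)) has m rows each of length λ_1 and ν = (λ_1 − λ_m, λ_1 − λ_{m−1}, …, λ_1 − λ_1). Then there is exactly one Littlewood–Richardson skew tableau of shape λ° with content λ; that is, the number of fillings of the boxes of μ/ν by positive integers that are weakly increasing along each row, strictly increasing down each column, contain exactly λ_j entries equal to j for each j, and whose reverse reading word is a lattice word, equals 1. -/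

import Mathlib

open Finset

/-- The set of boxes (0-indexed, rows `i : Fin m` from top to bottom, columns `j : ℕ`
from left to right) of the skew shape `λ°` obtained by rotating the Young diagram `λ`
by 180 degrees: it is the skew shape `μ/ν` where every row of `μ` has length
`λ_1 = max λ` and `ν_i = λ_1 − λ_{m+1−i}`; so row `i` consists of the columns `j` with
`λ_1 − λ_{m+1−i} ≤ j < λ_1`. -/
def rot180Boxes (m : ℕ) (lam : Fin m → ℕ) : Finset (Fin m × ℕ) :=
  ((Finset.univ : Finset (Fin m)) ×ˢ Finset.range (Finset.univ.sup lam)).filter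
    fun p => Finset.univ.sup lam - lam p.1.rev ≤ p.2

namespace LR18

variable {m : ℕ} {lam : Fin m → ℕ}

/-- number of boxes in column `c` -/
def cs (m : ℕ) (lam : Fin m → ℕ) (c : ℕ) : ℕ :=
  (Finset.univ.filter fun i : Fin m => Finset.univ.sup lam - lam i.rev ≤ c).card

lemma mem_rot {p : Fin m × ℕ} :
    p ∈ rot180Boxes m lam ↔
      p.2 < Finset.univ.sup lam ∧ Finset.univ.sup lam - lam p.1.rev ≤ p.2 := by
  simp [rot180Boxes]

lemma cs_le (c : ℕ) : cs m lam c ≤ m := by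
  classical
  calc cs m lam c ≤ (Finset.univ : Finset (Fin m)).card := Finset.card_filter_le _ _
  _ = m := by simp

lemma cs_mono {c c' : ℕ} (h : c ≤ c') : cs m lam c ≤ cs m lam c' := by
  apply Finset.card_le_card
  intro i hi
  simp only [Finset.mem_filter, Finset.mem_univ, true_and] at *
  omega

variable (hanti : ∀ i j : Fin m, i ≤ j → lam j ≤ lam i)
include hanti

/-- a row-index is in column `c` iff it is at least `m - cs c`. -/
lemma mem_S_iff (c : ℕ) (i : Fin m) :
    Finset.univ.sup lam - lam i.rev ≤ c ↔ m - cs m lam c ≤ i.val := by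
  constructor
  · intro h
    have hsub : Finset.Ici i ⊆
        Finset.univ.filter (fun i' : Fin m => Finset.univ.sup lam - lam i'.rev ≤ c) := by
      intro i' hi'
      simp only [Finset.mem_Ici] at hi'
      simp only [Finset.mem_filter, Finset.mem_univ, true_and]
      have : lam i.rev ≤ lam i'.rev := hanti i'.rev i.rev (Fin.rev_le_rev.mpr hi')
      omega
    have hcard := Finset.card_le_card hsub
    rw [Fin.card_Ici] at hcard
    have := cs_le (m := m) (lam := lam) c
    unfold cs at *
    omega
  · intro h
    by_contra hc
    have hsub : (Finset.univ.filter
        (fun i' : Fin m => Finset.univ.sup lam - lam i'.rev ≤ c)) ⊆ Finset.Ioi i := by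
      intro i'' h''
      simp only [Finset.mem_filter, Finset.mem_univ, true_and] at h''
      simp only [Finset.mem_Ioi]
      by_contra hle
      push_neg at hle
      have : lam i''.rev ≤ lam i.rev := hanti i.rev i''.rev (Fin.rev_le_rev.mpr hle)
      exact hc (by omega)
    have hcard := Finset.card_le_card hsub
    rw [Fin.card_Ioi] at hcard
    have hi := i.isLt
    unfold cs at *
    omega

lemma cs_ge_iff {j : ℕ} (hj : j < m) (c : ℕ) :
    j + 1 ≤ cs m lam c ↔ Finset.univ.sup lam - lam ⟨j, hj⟩ ≤ c := by
  constructor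
  · intro h
    have hcs := cs_le (m := m) (lam := lam) c
    have hjm : m - 1 - j < m := by omega
    set i0 : Fin m := ⟨m - 1 - j, hjm⟩ with hi0
    have hrev : i0.rev = ⟨j, hj⟩ := by
      ext
      simp [Fin.rev, hi0]
      omega
    have hmem : Finset.univ.sup lam - lam i0.rev ≤ c :=
      (mem_S_iff hanti c i0).mpr (by simp [hi0]; omega)
    rwa [hrev] at hmem
  · intro h
    have hsub : (Finset.Iic (⟨j, hj⟩ : Fin m)).image Fin.rev ⊆
        Finset.univ.filter (fun i' : Fin m => Finset.univ.sup lam - lam i'.rev ≤ c) := by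
      intro i' hi'
      simp only [Finset.mem_image, Finset.mem_Iic] at hi'
      obtain ⟨i'', hle, rfl⟩ := hi'
      simp only [Finset.mem_filter, Finset.mem_univ, true_and, Fin.rev_rev]
      have : lam ⟨j, hj⟩ ≤ lam i'' := hanti i'' ⟨j, hj⟩ hle
      omega
    have hcard := Finset.card_le_card hsub
    rw [Finset.card_image_of_injective _ Fin.rev_injective, Fin.card_Iic] at hcard
    exact hcard

omit hanti in
/-- the canonical LR filling -/
def T0 (m : ℕ) (lam : Fin m → ℕ) (p : Fin m × ℕ) : ℕ :=
  if p ∈ rot180Boxes m lam then p.1.val + 1 + cs m lam p.2 - m else 0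

lemma box_ineq {p : Fin m × ℕ} (hp : p ∈ rot180Boxes m lam) :
    m - cs m lam p.2 ≤ p.1.val :=
  (mem_S_iff hanti p.2 p.1).mp (mem_rot.mp hp).2

omit hanti in
lemma T0_val {p : Fin m × ℕ} (hp : p ∈ rot180Boxes m lam) :
    T0 m lam p = p.1.val + 1 + cs m lam p.2 - m := if_pos hp

lemma T0_eq_iff {p : Fin m × ℕ} (hp : p ∈ rot180Boxes m lam) (v : ℕ) :
    T0 m lam p = v + 1 ↔ cs m lam p.2 + p.1.val = m + v := by
  have h1 := box_ineq hanti hp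
  have h2 := p.1.isLt
  rw [T0_val hp]
  omega

lemma content_T0 (j : ℕ) :
    ((rot180Boxes m lam).filter fun p => T0 m lam p = j + 1).card
      = if h : j < m then lam ⟨j, h⟩ else 0 := by
  by_cases hj : j < m
  · rw [dif_pos hj]
    have hlamle : lam ⟨j, hj⟩ ≤ Finset.univ.sup lam := Finset.le_sup (Finset.mem_univ _)
    rw [show lam ⟨j, hj⟩ =
        (Finset.Ico (Finset.univ.sup lam - lam ⟨j, hj⟩) (Finset.univ.sup lam)).card by
      rw [Nat.card_Ico]; omega]
    apply Finset.card_bij (fun p _ => p.2)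
    · intro p hp
      rw [Finset.mem_filter] at hp
      obtain ⟨hbox, hval⟩ := hp
      have hc := (T0_eq_iff hanti hbox j).mp hval
      have h2 := p.1.isLt
      have hge : j + 1 ≤ cs m lam p.2 := by omega
      rw [Finset.mem_Ico]
      exact ⟨(cs_ge_iff hanti hj p.2).mp hge, (mem_rot.mp hbox).1⟩
    · intro p hp q hq hpq
      rw [Finset.mem_filter] at hp hq
      have hcp := (T0_eq_iff hanti hp.1 j).mp hp.2
      have hcq := (T0_eq_iff hanti hq.1 j).mp hq.2
      obtain ⟨p1, p2⟩ := p
      obtain ⟨q1, q2⟩ := q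
      dsimp at hpq hcp hcq
      subst hpq
      have : p1 = q1 := Fin.ext (by omega)
      rw [this]
    · intro c hc
      rw [Finset.mem_Ico] at hc
      have hge : j + 1 ≤ cs m lam c := (cs_ge_iff hanti hj c).mpr hc.1
      have hcsle := cs_le (m := m) (lam := lam) c
      have him : m + j - cs m lam c < m := by omega
      set i : Fin m := ⟨m + j - cs m lam c, him⟩ with hi
      have hiv : i.val = m + j - cs m lam c := rfl
      have hbox : (i, c) ∈ rot180Boxes m lam := by
        rw [mem_rot]
        exact ⟨hc.2, (mem_S_iff hanti c i).mpr (by omega)⟩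
      refine ⟨(i, c), ?_, rfl⟩
      rw [Finset.mem_filter]
      exact ⟨hbox, (T0_eq_iff hanti hbox j).mpr (by dsimp; omega)⟩
  · rw [dif_neg hj]
    rw [Finset.card_eq_zero, Finset.filter_eq_empty_iff]
    intro p hp hval
    have hc := (T0_eq_iff hanti hp j).mp hval
    have h1 := cs_le (m := m) (lam := lam) p.2
    have h2 := p.1.isLt
    omega

lemma T0_pos : ∀ p ∈ rot180Boxes m lam, 0 < T0 m lam p := by
  intro p hp
  have h1 := box_ineq hanti hp
  have h2 := p.1.isLt
  rw [T0_val hp]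
  omega

lemma T0_le (T : Fin m × ℕ → ℕ)
    (hpos : ∀ p ∈ rot180Boxes m lam, 0 < T p)
    (hcol : ∀ p ∈ rot180Boxes m lam, ∀ q ∈ rot180Boxes m lam,
        p.2 = q.2 → (p.1 : ℕ) < (q.1 : ℕ) → T p < T q) :
    ∀ p ∈ rot180Boxes m lam, T0 m lam p ≤ T p := by
  have key : ∀ n (i : Fin m) (c : ℕ), i.val ≤ n → (i, c) ∈ rot180Boxes m lam →
      T0 m lam (i, c) ≤ T (i, c) := by
    intro n
    induction n with
    | zero =>
      intro i c hle hbox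
      have h2 := cs_le (m := m) (lam := lam) c
      have h3 := hpos _ hbox
      rw [T0_val hbox]
      dsimp
      omega
    | succ n ih =>
      intro i c hle hbox
      have h1 := box_ineq hanti hbox
      have h2 := cs_le (m := m) (lam := lam) c
      have h3 := hpos _ hbox
      by_cases hcase : i.val + cs m lam c ≤ m
      · rw [T0_val hbox]
        dsimp at *
        omega
      · have hi1 : 1 ≤ i.val := by omega
        have hlt' : i.val - 1 < m := by omega
        set i' : Fin m := ⟨i.val - 1, hlt'⟩ with hi'
        have hiv : i'.val = i.val - 1 := rfl
        have hbox' : (i', c) ∈ rot180Boxes m lam := by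
          rw [mem_rot]
          exact ⟨(mem_rot.mp hbox).1, (mem_S_iff hanti c i').mpr (by omega)⟩
        have hIH := ih i' c (by omega) hbox'
        have hlt := hcol _ hbox' _ hbox rfl (by dsimp; omega)
        rw [T0_val hbox] at *
        rw [T0_val hbox'] at hIH
        dsimp at *
        omega
  exact fun p hp => by
    obtain ⟨i, c⟩ := p
    exact key i.val i c le_rfl hp

omit hanti in
lemma sum_content (T : Fin m × ℕ → ℕ)
    (hpos : ∀ p ∈ rot180Boxes m lam, 0 < T p)
    (hcont : ∀ j : ℕ, ((rot180Boxes m lam).filter fun p => T p = j + 1).card =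
        if h : j < m then lam ⟨j, h⟩ else 0) :
    ∑ p ∈ rot180Boxes m lam, T p
      = ∑ j ∈ Finset.range m, (j + 1) * (if h : j < m then lam ⟨j, h⟩ else 0) := by
  have hle : ∀ p ∈ rot180Boxes m lam, T p ≤ m := by
    intro p hp
    by_contra hgt
    push_neg at hgt
    have h0 := hcont (T p - 1)
    rw [dif_neg (by omega), Finset.card_eq_zero] at h0
    have hmem : p ∈ (rot180Boxes m lam).filter fun q => T q = (T p - 1) + 1 := by
      rw [Finset.mem_filter]
      exact ⟨hp, by omega⟩
    rw [h0] at hmem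
    exact absurd hmem (Finset.notMem_empty _)
  calc ∑ p ∈ rot180Boxes m lam, T p
      = ∑ p ∈ rot180Boxes m lam, ∑ v ∈ Finset.range (m + 1), if T p = v then v else 0 := by
        refine Finset.sum_congr rfl fun p hp => ?_
        rw [Finset.sum_ite_eq (Finset.range (m + 1)) (T p) (fun v => v),
          if_pos (Finset.mem_range.mpr (by have := hle p hp; omega))]
    _ = ∑ v ∈ Finset.range (m + 1), ∑ p ∈ rot180Boxes m lam, if T p = v then v else 0 :=
        Finset.sum_comm
    _ = ∑ v ∈ Finset.range (m + 1), v * ((rot180Boxes m lam).filter fun p => T p = v).card := by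
        refine Finset.sum_congr rfl fun v _ => ?_
        rw [← Finset.sum_filter, Finset.sum_const, smul_eq_mul, mul_comm]
    _ = ∑ j ∈ Finset.range m, (j + 1) * (if h : j < m then lam ⟨j, h⟩ else 0) := by
        rw [Finset.sum_range_succ']
        simp only [zero_mul, add_zero]
        exact Finset.sum_congr rfl fun j hj => by rw [hcont j]

end LR18

theorem unique_LR_tableau_rot180 (m : ℕ) (lam : Fin m → ℕ)
    (hanti : ∀ i j : Fin m, i ≤ j → lam j ≤ lam i) :
    ∃! T : Fin m × ℕ → ℕ,
      (∀ p : Fin m × ℕ, p ∉ rot180Boxes m lam → T p = 0) ∧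
      (∀ p ∈ rot180Boxes m lam, 0 < T p) ∧
      (∀ p ∈ rot180Boxes m lam, ∀ q ∈ rot180Boxes m lam,
        p.1 = q.1 → p.2 ≤ q.2 → T p ≤ T q) ∧
      (∀ p ∈ rot180Boxes m lam, ∀ q ∈ rot180Boxes m lam,
        p.2 = q.2 → (p.1 : ℕ) < (q.1 : ℕ) → T p < T q) ∧
      (∀ j : ℕ, ((rot180Boxes m lam).filter fun p => T p = j + 1).card =
        if h : j < m then lam ⟨j, h⟩ else 0) ∧
      (∀ p ∈ rot180Boxes m lam, ∀ t : ℕ,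
        ((rot180Boxes m lam).filter fun q =>
          (q.1 < p.1 ∨ (q.1 = p.1 ∧ p.2 ≤ q.2)) ∧ T q = t + 2).card ≤
        ((rot180Boxes m lam).filter fun q =>
          (q.1 < p.1 ∨ (q.1 = p.1 ∧ p.2 ≤ q.2)) ∧ T q = t + 1).card) := by
  classical
  refine ⟨LR18.T0 m lam, ⟨?_, LR18.T0_pos hanti, ?_, ?_, LR18.content_T0 hanti, ?_⟩, ?_⟩
  · -- zero outside
    intro p hp
    exact if_neg hp
  · -- rows weakly increasing
    intro p hp q hq h1 h2
    have hcs := LR18.cs_mono (m := m) (lam := lam) h2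
    have hval : p.1.val = q.1.val := congrArg Fin.val h1
    rw [LR18.T0_val hp, LR18.T0_val hq]
    omega
  · -- columns strictly increasing
    intro p hp q hq h1 h2
    have hcs : LR18.cs m lam p.2 = LR18.cs m lam q.2 := congrArg (LR18.cs m lam) h1
    have hbp := LR18.box_ineq hanti hp
    have hbq := LR18.box_ineq hanti hq
    rw [LR18.T0_val hp, LR18.T0_val hq]
    omega
  · -- lattice word condition
    intro p hp t
    apply Finset.card_le_card_of_injOn
      (fun q => (⟨q.1.val - 1, lt_of_le_of_lt (Nat.sub_le _ _) q.1.isLt⟩, q.2))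
    · intro q hq
      rw [Finset.mem_coe, Finset.mem_filter] at hq ⊢
      obtain ⟨hbox, hreg, hval⟩ := hq
      have hc := (LR18.T0_eq_iff hanti hbox (t + 1)).mp hval
      have hcsle := LR18.cs_le (m := m) (lam := lam) q.2
      have hq1 : t + 1 ≤ q.1.val := by omega
      have hbox' : ((⟨q.1.val - 1, lt_of_le_of_lt (Nat.sub_le _ _) q.1.isLt⟩ : Fin m), q.2)
          ∈ rot180Boxes m lam := by
        rw [LR18.mem_rot]
        exact ⟨(LR18.mem_rot.mp hbox).1, (LR18.mem_S_iff hanti _ _).mpr (by dsimp; omega)⟩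
      refine ⟨hbox', Or.inl ?_, (LR18.T0_eq_iff hanti hbox' t).mpr (by dsimp; omega)⟩
      rw [Fin.lt_def]
      dsimp
      rcases hreg with h | ⟨h, _⟩
      · rw [Fin.lt_def] at h
        omega
      · have : q.1.val = p.1.val := congrArg Fin.val h
        omega
    · intro q hq q' hq' heq
      simp only [Finset.coe_filter, Set.mem_setOf_eq] at hq hq'
      obtain ⟨hbox, hreg, hval⟩ := hq
      obtain ⟨hbox', hreg', hval'⟩ := hq'
      have hc := (LR18.T0_eq_iff hanti hbox (t + 1)).mp hval
      have hc' := (LR18.T0_eq_iff hanti hbox' (t + 1)).mp hval'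
      have hcsle := LR18.cs_le (m := m) (lam := lam) q.2
      have hcsle' := LR18.cs_le (m := m) (lam := lam) q'.2
      have hq1 : t + 1 ≤ q.1.val := by omega
      have hq1' : t + 1 ≤ q'.1.val := by omega
      obtain ⟨h1, h2⟩ := Prod.mk.injEq .. ▸ heq
      have h1' : q.1.val - 1 = q'.1.val - 1 := congrArg Fin.val h1
      obtain ⟨a1, a2⟩ := q
      obtain ⟨b1, b2⟩ := q'
      dsimp at *
      subst h2
      have : a1 = b1 := Fin.ext (by omega)
      rw [this]
  · -- uniqueness
    intro T hT
    obtain ⟨hzero, hpos, hrow, hcol, hcont, hlat⟩ := hT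
    have hlb := LR18.T0_le hanti T hpos hcol
    have hsum1 := LR18.sum_content T hpos hcont
    have hsum2 := LR18.sum_content (LR18.T0 m lam) (LR18.T0_pos hanti) (LR18.content_T0 hanti)
    have hEq : ∀ p ∈ rot180Boxes m lam, T p = LR18.T0 m lam p := by
      by_contra hne
      push_neg at hne
      obtain ⟨p, hp, hpne⟩ := hne
      have hlt : ∑ p ∈ rot180Boxes m lam, LR18.T0 m lam p < ∑ p ∈ rot180Boxes m lam, T p :=
        Finset.sum_lt_sum hlb ⟨p, hp, lt_of_le_of_ne (hlb p hp) fun h => hpne h.symm⟩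
      omega
    funext p
    by_cases hp : p ∈ rot180Boxes m lam
    · exact hEq p hp
    · rw [hzero p hp]
      exact (if_neg hp).symm
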